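/- Let (μₙ)_{n∈ℕ} be a sequence of probability measures on a measurable space Ω and let A₁, A₂, C be measurable sets. Suppose that for every k ∈ ℕ there exists N such that for all n ≥ N, μₙ(A₁ ∩ C) ≥ (1 − 1/n^k)·μₙ(A₁), and likewise for every k there exists N such that for all n ≥ N, μₙ(A₂ ∩ C) ≥ (1 − 1/n^k)·μₙ(A₂). Then for every k ∈ ℕ there exists N such that for all n ≥ N, μₙ((A₁ ∪ A₂) ∩ C) ≥ (1 − 1/n^k)·μₙ(A₁ ∪ A₂). (This is the soundness of the KLM disjunction rule OR under the super-polynomial ε-semantics.) -/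

import Mathlib

open MeasureTheory

/-- Soundness of the KLM disjunction rule OR under the super-polynomial
ε-semantics. -/
theorem KLM_OR_superpoly {Ω : Type*} [MeasurableSpace Ω]
    (μ : ℕ → Measure Ω) (hμ : ∀ n, IsProbabilityMeasure (μ n))
    (A₁ A₂ C : Set Ω)
    (hA₁ : MeasurableSet A₁) (hA₂ : MeasurableSet A₂) (hC : MeasurableSet C)
    (h₁ : ∀ k : ℕ, ∃ N : ℕ, ∀ n ≥ N,
      ENNReal.ofReal (1 - 1 / (n : ℝ) ^ k) * μ n A₁ ≤ μ n (A₁ ∩ C))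
    (h₂ : ∀ k : ℕ, ∃ N : ℕ, ∀ n ≥ N,
      ENNReal.ofReal (1 - 1 / (n : ℝ) ^ k) * μ n A₂ ≤ μ n (A₂ ∩ C)) :
    ∀ k : ℕ, ∃ N : ℕ, ∀ n ≥ N,
      ENNReal.ofReal (1 - 1 / (n : ℝ) ^ k) * μ n (A₁ ∪ A₂) ≤
        μ n ((A₁ ∪ A₂) ∩ C) := by
  intro k
  obtain ⟨N₁, hN₁⟩ := h₁ (k + 1)
  obtain ⟨N₂, hN₂⟩ := h₂ (k + 1)
  refine ⟨max (max N₁ N₂) 2, fun n hn => ?_⟩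
  have hn₁ : n ≥ N₁ := le_trans (le_trans (le_max_left _ _) (le_max_left _ _)) hn
  have hn₂ : n ≥ N₂ := le_trans (le_trans (le_max_right _ _) (le_max_left _ _)) hn
  have hn2 : (2 : ℕ) ≤ n := le_trans (le_max_right _ _) hn
  have hnR : (2 : ℝ) ≤ (n : ℝ) := by exact_mod_cast hn2
  have hnpos : (0 : ℝ) < n := by linarith
  haveI := hμ n
  set ε : ℝ := 1 / (n : ℝ) ^ (k + 1) with hε
  set δ : ℝ := 1 / (n : ℝ) ^ k with hδ
  have hεpos : 0 < ε := by positivity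
  have hδpos : 0 < δ := by positivity
  have hε1 : ε ≤ 1 := by
    rw [hε, div_le_one (by positivity)]
    exact one_le_pow₀ (by linarith)
  have hδ1 : δ ≤ 1 := by
    rw [hδ, div_le_one (by positivity)]
    exact one_le_pow₀ (by linarith)
  have h2εδ : 2 * ε ≤ δ := by
    rw [hε, hδ, pow_succ, mul_one_div,
      div_le_div_iff₀ (by positivity) (by positivity)]
    have hpk : (0 : ℝ) < (n : ℝ) ^ k := by positivity
    nlinarith
  -- bound on bad parts
  have key : ∀ (A : Set Ω),
      ENNReal.ofReal (1 - ε) * μ n A ≤ μ n (A ∩ C) →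
      μ n (A \ C) ≤ ENNReal.ofReal ε * μ n A := by
    intro A h
    have hsplit : μ n (A ∩ C) + μ n (A \ C) = μ n A := measure_inter_add_diff A hC
    have hle : ENNReal.ofReal (1 - ε) * μ n A + μ n (A \ C) ≤ μ n A :=
      (add_le_add_left h _).trans_eq hsplit
    have h1 : ENNReal.ofReal (1 - ε) * μ n A + ENNReal.ofReal ε * μ n A = μ n A := by
      rw [← add_mul, ← ENNReal.ofReal_add (by linarith) hεpos.le]
      norm_num
    have hle' : ENNReal.ofReal (1 - ε) * μ n A + μ n (A \ C) ≤
        ENNReal.ofReal (1 - ε) * μ n A + ENNReal.ofReal ε * μ n A := by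
      rw [h1]; exact hle
    exact (ENNReal.add_le_add_iff_left
      (ENNReal.mul_ne_top ENNReal.ofReal_ne_top (measure_ne_top _ _))).mp hle'
  have hb₁ : μ n (A₁ \ C) ≤ ENNReal.ofReal ε * μ n A₁ := key A₁ (hN₁ n hn₁)
  have hb₂ : μ n (A₂ \ C) ≤ ENNReal.ofReal ε * μ n A₂ := key A₂ (hN₂ n hn₂)
  set U := A₁ ∪ A₂ with hU
  have hU₁ : μ n A₁ ≤ μ n U := measure_mono Set.subset_union_left
  have hU₂ : μ n A₂ ≤ μ n U := measure_mono Set.subset_union_right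
  have hbad : μ n (U \ C) ≤ ENNReal.ofReal δ * μ n U := by
    have hdiff : U \ C = (A₁ \ C) ∪ (A₂ \ C) := Set.union_diff_distrib
    calc μ n (U \ C) ≤ μ n (A₁ \ C) + μ n (A₂ \ C) := by
          rw [hdiff]; exact measure_union_le _ _
      _ ≤ ENNReal.ofReal ε * μ n U + ENNReal.ofReal ε * μ n U :=
          add_le_add (hb₁.trans (mul_le_mul_right hU₁ _))
            (hb₂.trans (mul_le_mul_right hU₂ _))
      _ = ENNReal.ofReal (2 * ε) * μ n U := by
          rw [← add_mul, ← ENNReal.ofReal_add hεpos.le hεpos.le]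
          ring_nf
      _ ≤ ENNReal.ofReal δ * μ n U :=
          mul_le_mul_left (ENNReal.ofReal_le_ofReal h2εδ) _
  have hsum : ENNReal.ofReal (1 - δ) * μ n U + μ n (U \ C) ≤ μ n U := by
    calc ENNReal.ofReal (1 - δ) * μ n U + μ n (U \ C)
        ≤ ENNReal.ofReal (1 - δ) * μ n U + ENNReal.ofReal δ * μ n U :=
          add_le_add_right hbad _
      _ = μ n U := by
          rw [← add_mul, ← ENNReal.ofReal_add (by linarith) hδpos.le]
          norm_num
  have hsplitU : μ n (U ∩ C) + μ n (U \ C) = μ n U := measure_inter_add_diff U hC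
  have hsum' : ENNReal.ofReal (1 - δ) * μ n U + μ n (U \ C) ≤
      μ n (U ∩ C) + μ n (U \ C) := hsum.trans_eq hsplitU.symm
  exact (ENNReal.add_le_add_iff_right (measure_ne_top _ _)).mp hsum'
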